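/- For λ ∈ ℂ with 0 < |λ| < 1, the multiplication operator M_λ : f ↦ λ·f on the Fréchet space H(ℂ) of entire functions has the positive shadowing property. -/

import Mathlib

/-- The k-th seminorm on entire functions: sup of ‖f z‖ on the ball of radius k. -/
noncomputable def entireSeminorm (k : ℕ) (f : ℂ → ℂ) : ℝ :=
  sSup ((fun z => ‖f z‖) '' Metric.ball (0 : ℂ) k)

/-- The canonical complete invariant metric on H(ℂ). -/
noncomputable def entireDist (f g : ℂ → ℂ) : ℝ :=
  ∑' k : ℕ, (1 / 2 : ℝ) ^ (k + 1) * min 1 (entireSeminorm (k + 1) (fun z => f z - g z))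

lemma sem_nonneg (k : ℕ) (f : ℂ → ℂ) : 0 ≤ entireSeminorm k f :=
  Real.sSup_nonneg (by rintro x ⟨z, _, rfl⟩; positivity)

lemma sem_bdd {f : ℂ → ℂ} (hf : Continuous f) (k : ℕ) :
    BddAbove ((fun z => ‖f z‖) '' Metric.ball (0 : ℂ) k) := by
  have h1 : IsCompact (Metric.closedBall (0 : ℂ) k) := isCompact_closedBall _ _
  have h2 := h1.bddAbove_image ((continuous_norm.comp hf).continuousOn)
  exact h2.mono (Set.image_mono Metric.ball_subset_closedBall)

lemma sem_le {f : ℂ → ℂ} {k : ℕ} {M : ℝ} (hM : 0 ≤ M)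
    (h : ∀ z ∈ Metric.ball (0 : ℂ) k, ‖f z‖ ≤ M) : entireSeminorm k f ≤ M :=
  Real.sSup_le (by rintro x ⟨z, hz, rfl⟩; exact h z hz) hM

lemma le_sem {f : ℂ → ℂ} (hf : Continuous f) {k : ℕ} {z : ℂ}
    (hz : z ∈ Metric.ball (0 : ℂ) k) : ‖f z‖ ≤ entireSeminorm k f :=
  le_csSup (sem_bdd hf k) ⟨z, hz, rfl⟩

lemma sem_mono {f : ℂ → ℂ} (hf : Continuous f) {m k : ℕ} (h : m ≤ k) :
    entireSeminorm m f ≤ entireSeminorm k f :=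
  sem_le (sem_nonneg k f) fun _ hz =>
    le_sem hf (Metric.ball_subset_ball (by exact_mod_cast h) hz)

lemma dist_summable (f g : ℂ → ℂ) :
    Summable (fun k : ℕ =>
      (1 / 2 : ℝ) ^ (k + 1) * min 1 (entireSeminorm (k + 1) (fun z => f z - g z))) := by
  apply Summable.of_nonneg_of_le
    (fun k => mul_nonneg (by positivity) (le_min zero_le_one (sem_nonneg _ _)))
    (fun k => ?_) (summable_geometric_two.mul_right (1 / 2))
  calc (1 / 2 : ℝ) ^ (k + 1) * min 1 (entireSeminorm (k + 1) fun z => f z - g z)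
      ≤ (1 / 2 : ℝ) ^ (k + 1) * 1 :=
        mul_le_mul_of_nonneg_left (min_le_left _ _) (by positivity)
    _ = (1 / 2 : ℝ) ^ k * (1 / 2) := by rw [mul_one, pow_succ]

lemma dist_ge (f g : ℂ → ℂ) (K : ℕ) :
    (1 / 2 : ℝ) ^ (K + 1) * min 1 (entireSeminorm (K + 1) (fun z => f z - g z))
      ≤ entireDist f g :=
  Summable.le_tsum (dist_summable f g) K
    (fun _ _ => mul_nonneg (by positivity) (le_min zero_le_one (sem_nonneg _ _)))

lemma dist_le {f g : ℂ → ℂ} (hf : Continuous f) (hg : Continuous g) (N : ℕ) :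
    entireDist f g ≤ entireSeminorm N (fun z => f z - g z) + (1 / 2 : ℝ) ^ N := by
  have hc : Continuous fun z => f z - g z := hf.sub hg
  have hs := dist_summable f g
  rw [entireDist, ← Summable.sum_add_tsum_nat_add N hs]
  have h1 : ∑ k ∈ Finset.range N,
      (1 / 2 : ℝ) ^ (k + 1) * min 1 (entireSeminorm (k + 1) fun z => f z - g z)
      ≤ entireSeminorm N (fun z => f z - g z) := by
    calc ∑ k ∈ Finset.range N,
        (1 / 2 : ℝ) ^ (k + 1) * min 1 (entireSeminorm (k + 1) fun z => f z - g z)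
        ≤ ∑ k ∈ Finset.range N,
          (1 / 2 : ℝ) ^ (k + 1) * entireSeminorm N (fun z => f z - g z) := by
          refine Finset.sum_le_sum fun k hk => ?_
          refine mul_le_mul_of_nonneg_left ?_ (by positivity)
          exact (min_le_right _ _).trans (sem_mono hc (Finset.mem_range.mp hk))
      _ = (∑ k ∈ Finset.range N, (1 / 2 : ℝ) ^ (k + 1)) *
            entireSeminorm N (fun z => f z - g z) := by rw [Finset.sum_mul]
      _ ≤ 1 * entireSeminorm N (fun z => f z - g z) := by
          refine mul_le_mul_of_nonneg_right ?_ (sem_nonneg _ _)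
          have : ∀ k ∈ Finset.range N, (1 / 2 : ℝ) ^ (k + 1) ≤ (1/2:ℝ)^(k+1) := fun _ _ => le_rfl
          calc ∑ k ∈ Finset.range N, (1 / 2 : ℝ) ^ (k + 1)
              ≤ ∑' k : ℕ, (1 / 2 : ℝ) ^ (k + 1) := by
                refine Summable.sum_le_tsum _ (fun k _ => by positivity) ?_
                simpa [pow_succ] using summable_geometric_two.mul_right (1/2 : ℝ)
            _ = 1 := by
                have := tsum_geometric_two' 1
                simpa [pow_succ] using
                  (by rw [tsum_mul_right, tsum_geometric_two]; norm_num :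
                    ∑' k : ℕ, (1 / 2 : ℝ) ^ k * (1/2) = 1)
      _ = entireSeminorm N (fun z => f z - g z) := one_mul _
  have h2 : ∑' n : ℕ,
      (1 / 2 : ℝ) ^ (n + N + 1) * min 1 (entireSeminorm (n + N + 1) fun z => f z - g z)
      ≤ (1 / 2 : ℝ) ^ N := by
    calc ∑' n : ℕ,
        (1 / 2 : ℝ) ^ (n + N + 1) * min 1 (entireSeminorm (n + N + 1) fun z => f z - g z)
        ≤ ∑' n : ℕ, (1 / 2 : ℝ) ^ (n + N + 1) := by
          refine Summable.tsum_le_tsum (fun n => ?_) ((summable_nat_add_iff N).mpr hs) ?_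
          · calc (1 / 2 : ℝ) ^ (n + N + 1) * min 1 (entireSeminorm (n + N + 1) fun z => f z - g z)
                ≤ (1 / 2 : ℝ) ^ (n + N + 1) * 1 :=
                  mul_le_mul_of_nonneg_left (min_le_left _ _) (by positivity)
              _ = _ := mul_one _
          · have : Summable fun n : ℕ => (1 / 2 : ℝ) ^ n * (1/2:ℝ)^(N+1) :=
              summable_geometric_two.mul_right _
            refine this.congr fun n => ?_
            rw [← pow_add]; ring_nf
      _ ≤ (1 / 2 : ℝ) ^ N := by
          have : ∑' n : ℕ, (1 / 2 : ℝ) ^ (n + N + 1)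
              = (1/2:ℝ)^(N+1) * ∑' n : ℕ, (1 / 2 : ℝ) ^ n := by
            rw [← tsum_mul_left]
            exact tsum_congr fun n => by rw [← pow_add]; ring_nf
          rw [this, tsum_geometric_two]
          exact le_of_eq (by rw [pow_succ]; ring)
  linarith

/-- For 0 < |λ| < 1, the multiplication operator M_λ on H(ℂ) has the
positive shadowing property. -/
theorem stmt3 (l : ℂ) (hl0 : 0 < ‖l‖) (hl1 : ‖l‖ < 1) :
    ∀ ε > (0 : ℝ), ∃ δ > (0 : ℝ), ∀ F : ℕ → (ℂ → ℂ),
      (∀ j, Differentiable ℂ (F j)) →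
      (∀ j, entireDist (fun z => l * F j z) (F (j + 1)) ≤ δ) →
      ∃ f : ℂ → ℂ, Differentiable ℂ f ∧
        ∀ j, entireDist (F j) (fun z => l ^ j * f z) < ε := by
  intro ε hε
  have hl' : 0 < 1 - ‖l‖ := by linarith
  obtain ⟨M, hM⟩ := exists_pow_lt_of_lt_one (by linarith : (0:ℝ) < ε/2) (by norm_num : (1/2:ℝ) < 1)
  set N := M + 1 with hN
  have hNlt : (1/2:ℝ)^N < ε/2 := lt_of_le_of_lt (by
    apply pow_le_pow_of_le_one <;> norm_num <;> omega) hM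
  set c : ℝ := min (1/2) ((1 - ‖l‖) * ε / 4) with hc
  have hc0 : 0 < c := lt_min (by norm_num) (by positivity)
  refine ⟨(1/2:ℝ)^N * c, by positivity, fun F hF hd => ?_⟩
  have hcont : ∀ j, Continuous (F j) := fun j => (hF j).continuous
  -- seminorm of the pseudo-orbit error
  have herr : ∀ j, entireSeminorm N (fun z => l * F j z - F (j+1) z) ≤ c := by
    intro j
    have h1 := (dist_ge (fun z => l * F j z) (F (j+1)) M).trans (hd j)
    have h2 : min 1 (entireSeminorm N fun z => l * F j z - F (j+1) z) ≤ c := by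
      have hpos : (0:ℝ) < (1/2:ℝ)^N := by positivity
      have := (mul_le_mul_iff_right₀ hpos).mp h1
      exact this
    rcases le_or_gt (entireSeminorm N fun z => l * F j z - F (j+1) z) 1 with h | h
    · rwa [min_eq_right h] at h2
    · exfalso
      rw [min_eq_left h.le] at h2
      have : c < 1 := lt_of_le_of_lt (min_le_left _ _) (by norm_num)
      linarith
  -- induction: seminorm of F j - l^j F 0 ≤ c / (1 - ‖l‖)
  have key : ∀ j, entireSeminorm N (fun z => F j z - l ^ j * F 0 z) ≤ c / (1 - ‖l‖) := by
    intro j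
    induction j with
    | zero =>
        refine sem_le (by positivity) fun z _ => ?_
        simp only [pow_zero, one_mul, sub_self, norm_zero]
        positivity
    | succ j ih =>
        have heq : (fun z => F (j+1) z - l ^ (j+1) * F 0 z)
            = fun z => -(l * F j z - F (j+1) z) + l * (F j z - l ^ j * F 0 z) := by
          funext z; ring
        rw [heq]
        have hc1 : Continuous fun z => -(l * F j z - F (j+1) z) :=
          (((continuous_const.mul (hcont j)).sub (hcont (j+1)))).neg
        have hc2 : Continuous fun z => F j z - l ^ j * F 0 z :=
          (hcont j).sub (continuous_const.mul (hcont 0))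
        have step1 : entireSeminorm N (fun z => -(l * F j z - F (j+1) z)) ≤ c := by
          refine sem_le hc0.le fun z hz => ?_
          rw [norm_neg]
          exact (le_sem ((continuous_const.mul (hcont j)).sub (hcont (j+1))) hz).trans (herr j)
        have step2 : entireSeminorm N (fun z => l * (F j z - l ^ j * F 0 z))
            ≤ ‖l‖ * (c / (1 - ‖l‖)) := by
          refine sem_le (by positivity) fun z hz => ?_
          rw [norm_mul]
          exact mul_le_mul_of_nonneg_left ((le_sem hc2 hz).trans ih) (norm_nonneg l)
        have tri : entireSeminorm N
            (fun z => -(l * F j z - F (j+1) z) + l * (F j z - l ^ j * F 0 z))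
            ≤ entireSeminorm N (fun z => -(l * F j z - F (j+1) z))
              + entireSeminorm N (fun z => l * (F j z - l ^ j * F 0 z)) := by
          refine sem_le (add_nonneg (sem_nonneg _ _) (sem_nonneg _ _)) fun z hz => ?_
          exact (norm_add_le _ _).trans
            (add_le_add (le_sem hc1 hz) (le_sem (continuous_const.mul hc2) hz))
        have hne : (1 - ‖l‖) ≠ 0 := ne_of_gt hl'
        have hdc : c / (1 - ‖l‖) * (1 - ‖l‖) = c := div_mul_cancel₀ _ hne
        have : c + ‖l‖ * (c / (1 - ‖l‖)) = c / (1 - ‖l‖) := by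
          linear_combination -hdc
        linarith [tri, step1, step2]
  refine ⟨F 0, hF 0, fun j => ?_⟩
  have hd2 := dist_le (hcont j)
    (continuous_const.mul (hcont 0) : Continuous fun z => l ^ j * F 0 z) N
  have hcle : c / (1 - ‖l‖) ≤ ε / 4 := by
    rw [div_le_iff₀ hl']
    calc c ≤ (1 - ‖l‖) * ε / 4 := min_le_right _ _
      _ = ε / 4 * (1 - ‖l‖) := by ring
  calc entireDist (F j) (fun z => l ^ j * F 0 z)
      ≤ entireSeminorm N (fun z => F j z - l ^ j * F 0 z) + (1/2:ℝ)^N := hd2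
    _ ≤ c / (1 - ‖l‖) + (1/2:ℝ)^N := by linarith [key j]
    _ < ε / 4 + ε / 2 := by linarith
    _ < ε := by linarith
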